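/- A bijection λ : u → v between finite subsets of ℕ satisfying (for all x < y in u) 0 ≤ λ(x) − x ≤ λ(y) − y extends to a strictly increasing map f : ℕ → ℕ with f|_u = λ. -/
import Mathlib

/-- A bijection `l : u → v` between finite subsets of `ℕ` satisfying
`0 ≤ l x − x ≤ l y − y` for all `x < y` in `u` extends to a strictly increasing map
`f : ℕ → ℕ` with `f|_u = l`. -/
theorem morphism_extends_to_strictMono
    (u v : Finset ℕ) (l : ℕ → ℕ) (hbij : Set.BijOn l ↑u ↑v)
    (hge : ∀ x ∈ u, x ≤ l x)
    (hdiff : ∀ x ∈ u, ∀ y ∈ u, x < y → l x - x ≤ l y - y) :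
    ∃ f : ℕ → ℕ, StrictMono f ∧ ∀ x ∈ u, f x = l x := by
  set d : ℕ → ℕ := fun n => (u.filter (· ≤ n)).sup (fun x => l x - x) with hd
  refine ⟨fun n => n + d n, ?_, ?_⟩
  · intro n m hnm
    have hmono : d n ≤ d m := by
      apply Finset.sup_mono
      intro x hx
      simp only [Finset.mem_filter] at hx ⊢
      exact ⟨hx.1, by omega⟩
    simp only
    omega
  · intro x hx
    have hdx : d x = l x - x := by
      apply le_antisymm
      · apply Finset.sup_le
        intro y hy
        rw [Finset.mem_filter] at hy
        rcases lt_or_eq_of_le hy.2 with h | h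
        · exact hdiff y hy.1 x hx h
        · subst h; exact le_refl _
      · exact Finset.le_sup (f := fun x => l x - x) (Finset.mem_filter.mpr ⟨hx, le_refl x⟩)
    have := hge x hx
    simp only [hdx]
    omega
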